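/- Nonnegativity of the kinetic energy remainder under a CFL condition (1D, one dual cell): let h^{n+1} > 0, and let the convection term at the dual cell D be C = (1/|D|) Σ_ε F_ε u_ε with upwind values u_ε ∈ {u, u_ε'} chosen upwind with respect to the sign of F_ε, and Σ_ε F_ε = (|D|/δt)(h^n - h^{n+1}) (dual mass balance). Then the remainder R = (h^n/(2δt))(u^{n+1} - u^n)² + (correction terms from upwinding) in the discrete kinetic energy balance is nonnegative provided δt Σ_ε (F_ε)^- ≤ |D| h^{n+1}, where (F_ε)^- = max(-F_ε, 0). -/

import Mathlib

/-- Nonnegativity of the kinetic energy remainder under a CFL condition, on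
one dual cell with finitely many dual edges `ε`, mass fluxes `F ε`, upwind
velocities `uε ε` (equal to the local value `un` if `F ε ≥ 0` and to the
neighbouring value `uout ε` otherwise). -/
theorem kinetic_remainder_nonneg {Ed : Type*} [Fintype Ed]
    (δt mD : ℝ) (hδt : 0 < δt) (hmD : 0 < mD)
    (hn hnp : ℝ) (hhn : 0 < hn) (hhnp : 0 < hnp)
    (un unp G R : ℝ)
    (F uout uε : Ed → ℝ)
    (hupw : ∀ ε, uε ε = if 0 ≤ F ε then un else uout ε)
    (hmass : mD * (hnp - hn) + δt * ∑ ε, F ε = 0)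
    (hmom : 1/δt * (hnp * unp - hn * un) + 1/mD * ∑ ε, F ε * uε ε + G = 0)
    (hkin : 1/(2*δt) * (hnp * unp^2 - hn * un^2)
      + 1/(2*mD) * ∑ ε, F ε * (uε ε)^2 + G * unp = -R)
    (CFL : δt * ∑ ε, max (-(F ε)) 0 ≤ mD * hnp) :
    0 ≤ R := by
  have hδ := hδt.ne'
  have hm := hmD.ne'
  have hsum : ∑ ε, F ε * (unp - uε ε)^2
      = unp^2 * (∑ ε, F ε) - 2*unp * (∑ ε, F ε * uε ε) + ∑ ε, F ε * (uε ε)^2 := by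
    rw [Finset.mul_sum, Finset.mul_sum, ← Finset.sum_sub_distrib, ← Finset.sum_add_distrib]
    exact Finset.sum_congr rfl (fun ε _ => by ring)
  field_simp at hkin hmom
  have key : 2*δt*mD*R = mD*hn*(unp-un)^2 - δt*(∑ ε, F ε * (unp - uε ε)^2) := by
    linear_combination hkin - 2*unp * hmom + unp^2 * hmass + δt * hsum
  have hpt : ∀ ε, F ε * (unp - uε ε)^2
      = max (F ε) 0 * (unp - un)^2 - max (-(F ε)) 0 * (unp - uout ε)^2 := by
    intro ε
    rw [hupw ε]
    by_cases h : 0 ≤ F ε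
    · simp [h, max_eq_left (neg_nonpos_of_nonneg h), max_eq_left h]
    · push_neg at h
      rw [if_neg (not_le.mpr h), max_eq_right h.le, max_eq_left (by linarith)]
      ring
  have hsplit : ∑ ε, F ε * (unp - uε ε)^2
      = (∑ ε, max (F ε) 0) * (unp - un)^2 - ∑ ε, max (-(F ε)) 0 * (unp - uout ε)^2 := by
    rw [Finset.sum_mul, ← Finset.sum_sub_distrib]
    exact Finset.sum_congr rfl (fun ε _ => hpt ε)
  have hmaxsum : ∑ ε, max (F ε) 0 = (∑ ε, F ε) + ∑ ε, max (-(F ε)) 0 := by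
    rw [← Finset.sum_add_distrib]
    exact Finset.sum_congr rfl (fun ε _ => by rcases le_total 0 (F ε) with h|h <;>
      simp [max_eq_left, max_eq_right, h, neg_nonpos_of_nonneg, neg_nonneg.mpr])
  have hA : 0 ≤ mD*hn - δt * ∑ ε, max (F ε) 0 := by
    have : δt * (∑ ε, F ε) = mD * (hn - hnp) := by linarith
    rw [hmaxsum]; nlinarith [CFL]
  have hB : 0 ≤ ∑ ε, max (-(F ε)) 0 * (unp - uout ε)^2 :=
    Finset.sum_nonneg (fun ε _ => mul_nonneg (le_max_right _ _) (sq_nonneg _))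
  have h2 : 0 ≤ 2*δt*mD*R := by
    rw [key, hsplit]
    nlinarith [sq_nonneg (unp - un), mul_nonneg hA (sq_nonneg (unp-un)), mul_nonneg hδt.le hB]
  nlinarith [mul_pos (mul_pos (by linarith : (0:ℝ) < 2*δt) hmD) hδt]
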